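/- Let K = RatFunc ℚ with A = RatFunc.X. Let V be a K-vector space, s : V →ₗ[K] V a K-linear endomorphism, and W ⊆ V a subspace with s(W) ⊆ W. Let m : ℕ, and define Δ₋ = A • id - A⁻¹ • s, Δ₊ = A • s - A⁻¹ • id, and Δ₊ₘ = A^(4m+1) • s - A⁻¹ • id. Suppose L, R : ℤ → V are families satisfying: (1) s(L a) = L (a+2) and s(R a) = R (a+2) for all a ∈ ℤ; (2) L a - A^(2 m a) • R a ∈ W for all a ∈ ℤ; (3) there are p, q : ℕ with Δ₊^p (L a) ∈ W for all a ∈ ℤ and Δ₋^q (R a) ∈ W for all a ∈ ℤ. Then R a ∈ W and L a ∈ W for all a ∈ ℤ. -/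

import Mathlib

set_option synthInstance.maxHeartbeats 800000
set_option maxHeartbeats 1600000

/-- The variable `A` of the field of rational functions `ℚ(A)`. -/
noncomputable def A : RatFunc ℚ := RatFunc.X

/-- The subalgebra of endomorphisms preserving a submodule `W`. -/
def invAlg (R V : Type*) [CommSemiring R] [AddCommMonoid V] [Module R V]
    (W : Submodule R V) : Subalgebra R (Module.End R V) where
  carrier := {f | ∀ w ∈ W, f w ∈ W}
  mul_mem' hf hg w hw := hf _ (hg _ hw)
  one_mem' w hw := hw
  add_mem' hf hg w hw := W.add_mem (hf w hw) (hg w hw)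
  zero_mem' w hw := by simpa using W.zero_mem
  algebraMap_mem' c w hw := by
    simpa [Module.algebraMap_end_apply] using W.smul_mem c hw

lemma pow_add_mem_span {R : Type*} [CommRing R] (x y : R) (p q : ℕ) :
    (x + y) ^ (p + q) ∈ Ideal.span {x ^ p, y ^ q} := by
  rw [add_pow]
  refine Ideal.sum_mem _ fun k hk => ?_
  simp only [Finset.mem_range] at hk
  by_cases hkp : p ≤ k
  · obtain ⟨d, rfl⟩ : ∃ d, k = p + d := ⟨k - p, by omega⟩
    rw [pow_add, mul_assoc, mul_assoc]
    exact Ideal.mul_mem_right _ _ (Ideal.subset_span (by simp))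
  · obtain ⟨d, hd⟩ : ∃ d, p + q - k = q + d := ⟨p + q - k - q, by omega⟩
    rw [hd, pow_add,
      show x ^ k * (y ^ q * y ^ d) * ((p + q).choose k : R)
        = y ^ q * (x ^ k * y ^ d * ((p + q).choose k : R)) by ring]
    exact Ideal.mul_mem_right _ _ (Ideal.subset_span (by simp))

theorem stmt_8 {V : Type*} [AddCommGroup V] [Module (RatFunc ℚ) V]
    (s : Module.End (RatFunc ℚ) V) (W : Submodule (RatFunc ℚ) V)
    (hW : ∀ w ∈ W, s w ∈ W) (m : ℕ) (L R : ℤ → V)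
    (hL : ∀ a : ℤ, s (L a) = L (a + 2))
    (hR : ∀ a : ℤ, s (R a) = R (a + 2))
    (hLR : ∀ a : ℤ, L a - A ^ (2 * (m : ℤ) * a) • R a ∈ W)
    (p q : ℕ)
    (hp : ∀ a : ℤ, ((A • s - A⁻¹ • (1 : Module.End (RatFunc ℚ) V)) ^ p) (L a) ∈ W)
    (hq : ∀ a : ℤ, ((A • (1 : Module.End (RatFunc ℚ) V) - A⁻¹ • s) ^ q) (R a) ∈ W) :
    ∀ a : ℤ, R a ∈ W ∧ L a ∈ W := by
  classical
  have hA : A ≠ 0 := RatFunc.X_ne_zero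
  -- the invariant subalgebra
  set S : Subalgebra (RatFunc ℚ) (Module.End (RatFunc ℚ) V) := invAlg (RatFunc ℚ) V W with hS
  have hsS : s ∈ S := hW
  -- the polynomials
  set dp : Polynomial (RatFunc ℚ) := Polynomial.C A * Polynomial.X - Polynomial.C A⁻¹ with hdp
  set dm : Polynomial (RatFunc ℚ) := Polynomial.C A - Polynomial.C A⁻¹ * Polynomial.X with hdm
  have haevaldp : Polynomial.aeval s dp = A • s - A⁻¹ • (1 : Module.End (RatFunc ℚ) V) := by
    simp [hdp, Algebra.smul_def, Polynomial.aeval_X, Polynomial.aeval_C]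
  have haevaldm :
      Polynomial.aeval s dm = A • (1 : Module.End (RatFunc ℚ) V) - A⁻¹ • s := by
    simp [hdm, Algebra.smul_def, Polynomial.aeval_X, Polynomial.aeval_C]
  have hA2 : A ^ 2 * A⁻¹ = A := by field_simp
  have hsum : dp + Polynomial.C (A ^ 2) * dm = Polynomial.C (A ^ 3 - A⁻¹) := by
    rw [hdp, hdm, mul_sub, ← Polynomial.C_mul, ← mul_assoc, ← Polynomial.C_mul, hA2,
      show A ^ 2 * A = A ^ 3 by ring, map_sub]
    ring
  have hA4 : A ^ 4 ≠ 1 := by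
    intro h
    have h' : algebraMap (Polynomial ℚ) (RatFunc ℚ) (Polynomial.X ^ 4)
        = algebraMap (Polynomial ℚ) (RatFunc ℚ) 1 := by
      simpa [map_pow, RatFunc.algebraMap_X, A] using h
    have := RatFunc.algebraMap_injective ℚ h'
    simpa using congrArg Polynomial.natDegree this
  have hc : A ^ 3 - A⁻¹ ≠ 0 := by
    intro h
    apply hA4
    have h3 : A ^ 3 = A⁻¹ := sub_eq_zero.mp h
    calc A ^ 4 = A ^ 3 * A := by ring
      _ = A⁻¹ * A := by rw [h3]
      _ = 1 := inv_mul_cancel₀ hA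
  -- any polynomial in s preserves W
  have haevalS : ∀ f : Polynomial (RatFunc ℚ), Polynomial.aeval s f ∈ S := by
    intro f
    have h1 : Polynomial.aeval s f ∈ Algebra.adjoin (RatFunc ℚ) {s} :=
      Polynomial.aeval_mem_adjoin_singleton (RatFunc ℚ) s
    exact Algebra.adjoin_le (by simpa using hsS) h1
  -- step 1 : Δ₊^p (R a) ∈ W
  have h1 : ∀ a : ℤ, (Polynomial.aeval s (dp ^ p)) (R a) ∈ W := by
    intro a
    have h2 : (Polynomial.aeval s (dp ^ p)) (L a - A ^ (2 * (m : ℤ) * a) • R a) ∈ W :=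
      haevalS (dp ^ p) _ (hLR a)
    rw [map_sub, map_smul] at h2
    have h3 : A ^ (2 * (m : ℤ) * a) • (Polynomial.aeval s (dp ^ p)) (R a) ∈ W := by
      have h4 : (Polynomial.aeval s (dp ^ p)) (L a) ∈ W := by
        rw [map_pow, haevaldp]; exact hp a
      simpa using W.sub_mem h4 h2
    have hz : A ^ (2 * (m : ℤ) * a) ≠ 0 := zpow_ne_zero _ hA
    have h5 := W.smul_mem (A ^ (2 * (m : ℤ) * a))⁻¹ h3
    rwa [smul_smul, inv_mul_cancel₀ hz, one_smul] at h5
  -- step 2 : binomial / ideal argument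
  have hmem : Polynomial.C (A ^ 3 - A⁻¹) ^ (p + q)
      ∈ Ideal.span {dp ^ p, (Polynomial.C (A ^ 2) * dm) ^ q} := by
    rw [← hsum]
    exact pow_add_mem_span _ _ p q
  obtain ⟨u, v, huv⟩ := Ideal.mem_span_pair.mp hmem
  have hRa : ∀ a : ℤ, R a ∈ W := by
    intro a
    have happ : (Polynomial.aeval s (u * dp ^ p + v * (Polynomial.C (A ^ 2) * dm) ^ q)) (R a)
        ∈ W := by
      rw [map_add, map_mul, map_mul]
      refine W.add_mem ?_ ?_
      · exact haevalS u _ (h1 a)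
      · refine haevalS v _ ?_
        rw [map_pow, map_mul, haevaldm, Polynomial.aeval_C]
        have h6 : (((algebraMap (RatFunc ℚ) (Module.End (RatFunc ℚ) V)) (A ^ 2)
            * (A • (1 : Module.End (RatFunc ℚ) V) - A⁻¹ • s)) ^ q) (R a)
            = ((A ^ 2) ^ q) • ((A • (1 : Module.End (RatFunc ℚ) V) - A⁻¹ • s) ^ q) (R a) := by
          have e : (algebraMap (RatFunc ℚ) (Module.End (RatFunc ℚ) V)) (A ^ 2)
              * (A • (1 : Module.End (RatFunc ℚ) V) - A⁻¹ • s)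
              = (A ^ 2) • (A • (1 : Module.End (RatFunc ℚ) V) - A⁻¹ • s) :=
            (Algebra.smul_def _ _).symm
          rw [e]
          rw [smul_pow]
          simp [LinearMap.smul_apply]
        rw [h6]
        exact W.smul_mem _ (hq a)
    rw [huv] at happ
    have h7 : (Polynomial.aeval s (Polynomial.C (A ^ 3 - A⁻¹) ^ (p + q))) (R a)
        = ((A ^ 3 - A⁻¹) ^ (p + q)) • R a := by
      rw [map_pow, Polynomial.aeval_C]
      rw [← map_pow, Module.algebraMap_end_apply]
    rw [h7] at happ
    have hcn : ((A ^ 3 - A⁻¹) ^ (p + q)) ≠ 0 := pow_ne_zero _ hc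
    have h8 := W.smul_mem ((A ^ 3 - A⁻¹) ^ (p + q))⁻¹ happ
    rwa [smul_smul, inv_mul_cancel₀ hcn, one_smul] at h8
  intro a
  refine ⟨hRa a, ?_⟩
  have := W.add_mem (hLR a) (W.smul_mem (A ^ (2 * (m : ℤ) * a)) (hRa a))
  simpa using this
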